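/- Let T be a discrete linearly ordered abelian group with least positive element 1_T and a distinguished positive cofinal element z_T, and assume that T/⟨1_T⟩ is divisible. Then: (1) for every prime p and every n ≥ 1, there exists exactly one k ∈ {0,…,p^n−1} such that there is x ∈ T with p^n·x = z_T + k·1_T; (2) if k ∈ {0,…,p^n−1} is such a number and k = a_0 + a_1 p + … + a_{n−1} p^{n−1} with each a_i ∈ {0,…,p−1}, then for every j ≤ n there exists x ∈ T with p^j·x = z_T + (a_0 + a_1 p + … + a_{j−1} p^{j−1})·1_T. -/

import Mathlib

private lemma aux_key {T : Type*} [AddCommGroup T] [LinearOrder T] [IsOrderedAddMonoid T] {e : T}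
    (he0 : 0 < e) (hel : ∀ x : T, 0 < x → e ≤ x)
    {N m : ℤ} (hN : 0 < N) (hm : |m| < N) {d : T} (hd : N • d = m • e) : m = 0 := by
  have habs := abs_lt.mp hm
  rcases lt_trichotomy d 0 with h | h | h
  · have hde : d ≤ -e := by
      have := hel (-d) (by simpa using h)
      exact le_neg.mpr this
    have h1 : N • d ≤ N • (-e) := zsmul_le_zsmul_right hN.le hde
    have h2 : (-N) • e < m • e := zsmul_lt_zsmul_left he0 (by linarith)
    rw [smul_neg, ← neg_smul] at h1
    rw [hd] at h1
    exact absurd (h1.trans_lt h2) (lt_irrefl _)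
  · rcases lt_trichotomy m 0 with hm' | hm' | hm'
    · have h2 : 0 < (-m) • e := zsmul_pos he0 (by omega)
      rw [h, smul_zero] at hd
      rw [neg_smul, ← hd, neg_zero] at h2
      exact absurd h2 (lt_irrefl 0)
    · exact hm'
    · have h2 : 0 < m • e := zsmul_pos he0 hm'
      rw [h, smul_zero] at hd
      rw [← hd] at h2
      exact absurd h2 (lt_irrefl 0)
  · have hde : e ≤ d := hel d h
    have h1 : N • e ≤ N • d := zsmul_le_zsmul_right hN.le hde
    have h2 : m • e < N • e := zsmul_lt_zsmul_left he0 (by linarith)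
    rw [hd] at h1
    exact absurd (h1.trans_lt h2) (lt_irrefl _)


/-- In a discrete linearly ordered abelian group `T` with least positive element `e`,
positive cofinal element `z`, and divisible quotient `T/⟨e⟩`:
(1) for every prime `p` and `n ≥ 1` there is exactly one `k < p^n` with
`z + k•e` divisible by `p^n`; and (2) if `k = a_0 + a_1 p + ⋯ + a_{n-1}p^{n-1}` is
such a number, then for every `j ≤ n`, `z + (a_0 + ⋯ + a_{j-1}p^{j-1})•e` is
divisible by `p^j`. -/
theorem discrete_divisible_quotient_digits (T : Type*) [AddCommGroup T] [LinearOrder T] [IsOrderedAddMonoid T]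
    (e z : T) (he : 0 < e ∧ ∀ x : T, 0 < x → e ≤ x) (hz : 0 < z)
    (hcof : ∀ t : T, ∃ m : ℕ, t ≤ m • z)
    (hdiv : ∀ x : T, ∀ n : ℕ, 1 ≤ n → ∃ y : T, ∃ k : ℤ, n • y = x + k • e) :
    (∀ p : ℕ, p.Prime → ∀ n : ℕ, 1 ≤ n →
      ∃! k : ℕ, k < p ^ n ∧ ∃ x : T, (p ^ n) • x = z + k • e) ∧
    (∀ p : ℕ, p.Prime → ∀ n : ℕ, 1 ≤ n → ∀ a : ℕ → ℕ, (∀ i : ℕ, i < n → a i < p) →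
      (∃ x : T, (p ^ n) • x = z + (∑ i ∈ Finset.range n, a i * p ^ i) • e) →
      ∀ j : ℕ, j ≤ n →
        ∃ x : T, (p ^ j) • x = z + (∑ i ∈ Finset.range j, a i * p ^ i) • e) := by
  constructor
  · intro p hp n hn
    have hNpos : 0 < p ^ n := pow_pos hp.pos n
    have hNZ : (0 : ℤ) < ((p ^ n : ℕ) : ℤ) := by exact_mod_cast hNpos
    obtain ⟨y, k, hy⟩ := hdiv z (p ^ n) hNpos
    set N : ℤ := ((p ^ n : ℕ) : ℤ) with hNdef
    have hrlt : k % N < N := Int.emod_lt_of_pos k hNZ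
    have hrnn : 0 ≤ k % N := Int.emod_nonneg k (ne_of_gt hNZ)
    have hmain : (p ^ n) • (y - (k / N) • e) = z + (k % N) • e := by
      have h1 : (p ^ n) • (y - (k / N) • e)
          = (p ^ n) • y - (N * (k / N)) • e := by
        rw [smul_sub]
        congr 1
        rw [← natCast_zsmul, smul_smul]
      rw [h1, hy]
      have : k • e - (N * (k / N)) • e = (k % N) • e := by
        rw [← sub_smul]
        congr 1
        rw [Int.emod_def]
      rw [add_sub_assoc, this]
    refine ⟨(k % N).toNat, ⟨?_, ⟨y - (k / N) • e, ?_⟩⟩, ?_⟩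
    · have h2 : ((k % N).toNat : ℤ) < ((p ^ n : ℕ) : ℤ) := by
        rw [← hNdef, Int.toNat_of_nonneg hrnn]; exact hrlt
      exact_mod_cast h2
    · rw [hmain]
      congr 1
      rw [← natCast_zsmul, Int.toNat_of_nonneg hrnn]
    · rintro k' ⟨hk', x', hx'⟩
      have hdd : N • (x' - (y - (k / N) • e)) = ((k' : ℤ) - k % N) • e := by
        have h1 : N • x' = z + (k' : ℤ) • e := by
          rw [hNdef, natCast_zsmul, hx', natCast_zsmul]
        have h2 : N • (y - (k / N) • e) = z + (k % N) • e := by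
          rw [hNdef, natCast_zsmul, hmain]
        rw [smul_sub, h1, h2, sub_smul]
        abel
      have habs : |(k' : ℤ) - k % N| < N := by
        rw [abs_lt]
        constructor
        · have : ((k' : ℤ)) ≥ 0 := Int.ofNat_nonneg k'
          linarith
        · have : ((k' : ℤ)) < N := by rw [hNdef]; exact_mod_cast hk'
          linarith
      have := aux_key he.1 he.2 hNZ habs hdd
      omega
  · rintro p hp n hn a ha ⟨x, hx⟩ j hj
    set m := n - j with hm
    have hnm : n = j + m := (Nat.add_sub_cancel' hj).symm
    set R := ∑ i ∈ Finset.range m, a (j + i) * p ^ i with hR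
    have hsum : ∑ i ∈ Finset.range n, a i * p ^ i
        = (∑ i ∈ Finset.range j, a i * p ^ i) + p ^ j * R := by
      rw [hnm, Finset.sum_range_add, hR, Finset.mul_sum]
      congr 1
      refine Finset.sum_congr rfl fun i _ => ?_
      rw [pow_add]; ring
    refine ⟨p ^ m • x - R • e, ?_⟩
    rw [smul_sub, smul_smul, ← pow_add, ← hnm, hx, hsum, add_smul, smul_smul]
    abel
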